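/- arXiv:1501.01670 — 3 statements merged into one kernel-verified Lean document; each statement's English description precedes it below -/
import Mathlib

section
/- Let A be a nonsingular 2×2 integer matrix having a real eigenvalue of modulus one. Then the induced map on the torus T² = ℝ²/ℤ² is not topologically transitive. -/
open MeasureTheory Topology Polynomial Set

attribute [local instance] ZeroLEOneClass.factZeroLtOne

noncomputable section

/-- The two-dimensional torus `ℝ²/ℤ²`. -/
abbrev T2 : Type := AddCircle (1 : ℝ) × AddCircle (1 : ℝ)

/-- The canonical projection `π : ℝ² → T²`. -/
def pr : ℝ × ℝ → T2 := fun p => ((p.1 : AddCircle (1 : ℝ)), (p.2 : AddCircle (1 : ℝ)))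

/-- The linear action of a `2×2` integer matrix on `ℝ²`. -/
def matAct (A : Matrix (Fin 2) (Fin 2) ℤ) (p : ℝ × ℝ) : ℝ × ℝ :=
  (((A 0 0 : ℤ) : ℝ) * p.1 + ((A 0 1 : ℤ) : ℝ) * p.2,
   ((A 1 0 : ℤ) : ℝ) * p.1 + ((A 1 1 : ℤ) : ℝ) * p.2)

/-- The action of a `2×2` integer matrix on `ℤ² ≅ π₁(T²)`. -/
def matActZ (A : Matrix (Fin 2) (Fin 2) ℤ) (v : ℤ × ℤ) : ℤ × ℤ :=
  (A 0 0 * v.1 + A 0 1 * v.2, A 1 0 * v.1 + A 1 1 * v.2)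

/-- `f` preserves the Haar (Lebesgue) measure of the torus:
`λ(f⁻¹(A)) = λ(A)` for every Borel set `A`. -/
def AreaPreserving (f : T2 → T2) : Prop :=
  ∀ s : Set T2, MeasurableSet s → volume (f ⁻¹' s) = volume s

/-- `f` is topologically transitive: some forward orbit is dense. -/
def TopTransitive (f : T2 → T2) : Prop :=
  ∃ x : T2, Dense (Set.range fun n : ℕ => f^[n] x)

/-- The open set is regular: it equals the interior of its closure. -/
def IsRegularOpenSet (U : Set T2) : Prop :=
  U = interior (closure U)

/-- A connected open set `U ⊆ T²` is elementary if the canonical projection `pr`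
restricts to a homeomorphism from each connected component of `pr ⁻¹' U` onto `U`. -/
def IsElementary (U : Set T2) : Prop :=
  ∀ x ∈ pr ⁻¹' U,
    ∃ e : (connectedComponentIn (pr ⁻¹' U) x) ≃ₜ U,
      ∀ y : connectedComponentIn (pr ⁻¹' U) x, (e y : T2) = pr (y : ℝ × ℝ)

/-- If a nonsingular `2×2` integer matrix has a real eigenvalue of
modulus one, then the map it induces on the torus is not topologically transitive. -/
theorem statement2
    (A : Matrix (Fin 2) (Fin 2) ℤ) (hA : A.det ≠ 0)
    (heig : ∃ c : ℝ, |c| = 1 ∧ (Matrix.charpoly (A.map (Int.cast : ℤ → ℝ))).IsRoot c)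
    (g : T2 → T2) (hg : ∀ p : ℝ × ℝ, g (pr p) = pr (matAct A p)) :
    ¬ TopTransitive g := by
  obtain ⟨c, hc1, hroot⟩ := heig
  obtain ⟨ε, hε, hεc⟩ : ∃ ε : ℤ, (ε = 1 ∨ ε = -1) ∧ (ε : ℝ) = c := by
    rcases (abs_eq (by norm_num : (0:ℝ) ≤ 1)).mp hc1 with h | h
    · exact ⟨1, Or.inl rfl, by simp [h]⟩
    · exact ⟨-1, Or.inr rfl, by simp [h]⟩
  -- the characteristic equation over ℤ
  have hkey : (ε - A 0 0) * (ε - A 1 1) - A 0 1 * A 1 0 = 0 := by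
    have h1 : Polynomial.eval c (Matrix.charpoly (A.map (Int.cast : ℤ → ℝ))) = 0 := hroot
    rw [Matrix.charpoly, ← Polynomial.coe_evalRingHom, RingHom.map_det,
      Matrix.det_fin_two] at h1
    simp only [RingHom.mapMatrix_apply, Matrix.map_apply,
      Matrix.charmatrix_apply_eq,
      Matrix.charmatrix_apply_ne _ _ _ (by decide : (0 : Fin 2) ≠ 1),
      Matrix.charmatrix_apply_ne _ _ _ (by decide : (1 : Fin 2) ≠ 0),
      Polynomial.coe_evalRingHom, Polynomial.eval_sub, Polynomial.eval_X,
      Polynomial.eval_C, Polynomial.eval_neg] at h1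
    have h2 : ((ε : ℝ) - (A 0 0 : ℤ)) * ((ε : ℝ) - (A 1 1 : ℤ)) - (A 0 1 : ℤ) * (A 1 0 : ℤ) = 0 := by
      rw [hεc]; linear_combination h1
    exact_mod_cast h2
  -- an integer left eigenvector (p, q)
  obtain ⟨p, q, hpq, h1, h2⟩ : ∃ p q : ℤ, ¬(p = 0 ∧ q = 0) ∧
      p * A 0 0 + q * A 1 0 = ε * p ∧ p * A 0 1 + q * A 1 1 = ε * q := by
    rcases ne_or_eq (ε - A 0 0) 0 with h | h
    · exact ⟨A 1 0, ε - A 0 0, fun hh => h hh.2, by ring, by linear_combination -hkey⟩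
    rcases ne_or_eq (A 1 0) 0 with h' | h'
    · exact ⟨A 1 0, ε - A 0 0, fun hh => h' hh.1, by ring, by linear_combination -hkey⟩
    rcases ne_or_eq (A 0 1) 0 with h'' | h''
    · exact ⟨A 1 1 - ε, -A 0 1, fun hh => h'' (neg_eq_zero.mp hh.2), by linear_combination hkey,
        by ring⟩
    rcases ne_or_eq (A 1 1 - ε) 0 with h3 | h3
    · exact ⟨A 1 1 - ε, -A 0 1, fun hh => h3 hh.1, by linear_combination hkey, by ring⟩
    · exact ⟨1, 0, by simp, by linear_combination -h, by linear_combination h''⟩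
  -- the projection F onto the circle
  set F : T2 → AddCircle (1 : ℝ) := fun z => p • z.1 + q • z.2 with hF
  have hFcont : Continuous F :=
    ((continuous_zsmul p).comp continuous_fst).add ((continuous_zsmul q).comp continuous_snd)
  have hFpr : ∀ v : ℝ × ℝ,
      F (pr v) = (((p : ℝ) * v.1 + (q : ℝ) * v.2 : ℝ) : AddCircle (1 : ℝ)) := by
    intro v
    simp only [hF, pr]
    rw [← AddCircle.coe_zsmul (1:ℝ), ← AddCircle.coe_zsmul (1:ℝ), ← AddCircle.coe_add]
    norm_cast
    simp [zsmul_eq_mul]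
  have hFg : ∀ z : T2, F (g z) = ε • F z := by
    rintro ⟨z1, z2⟩
    induction z1 using QuotientAddGroup.induction_on with
    | H x =>
    induction z2 using QuotientAddGroup.induction_on with
    | H y =>
    have hzz : ((x : AddCircle (1:ℝ)), (y : AddCircle (1:ℝ))) = pr (x, y) := rfl
    rw [hzz, hg, hFpr, hFpr]
    rw [← AddCircle.coe_zsmul (1:ℝ)]
    congr 1
    simp only [matAct, zsmul_eq_mul]
    have h1' : (p : ℝ) * (A 0 0 : ℤ) + (q : ℝ) * (A 1 0 : ℤ) = (ε : ℝ) * p := by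
      exact_mod_cast congrArg (Int.cast : ℤ → ℝ) h1
    have h2' : (p : ℝ) * (A 0 1 : ℤ) + (q : ℝ) * (A 1 1 : ℤ) = (ε : ℝ) * q := by
      exact_mod_cast congrArg (Int.cast : ℤ → ℝ) h2
    push_cast
    push_cast at h1' h2'
    linear_combination x * h1' + y * h2'
  rintro ⟨x, hx⟩
  -- the orbit's image under F lies in a two-element set
  have horb : ∀ n : ℕ, F (g^[n] x) = F x ∨ F (g^[n] x) = -F x := by
    intro n
    induction n with
    | zero => exact Or.inl rfl
    | succ n ih =>
      rw [Function.iterate_succ_apply', hFg]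
      rcases hε with hε | hε <;> rcases ih with ih | ih <;> rw [hε, ih] <;> simp
  -- F is surjective
  have hFsurj : Function.Surjective F := by
    intro t
    induction t using QuotientAddGroup.induction_on with
    | H r =>
    rcases not_and_or.mp hpq with hp | hq
    · refine ⟨pr (r / p, 0), ?_⟩
      rw [hFpr]
      congr 1
      field_simp
      simp
    · refine ⟨pr (0, r / q), ?_⟩
      rw [hFpr]
      congr 1
      field_simp
      simp
  -- density transfers; contradiction with infinitude of the circle
  have hdense : Dense (F '' (Set.range fun n : ℕ => g^[n] x)) :=
    hFsurj.denseRange.dense_image hFcont hx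
  have hsub : F '' (Set.range fun n : ℕ => g^[n] x) ⊆ {F x, -F x} := by
    rintro _ ⟨_, ⟨n, rfl⟩, rfl⟩
    exact horb n
  have hSfin : ({F x, -F x} : Set (AddCircle (1:ℝ))).Finite :=
    (Set.finite_singleton _).insert _
  have huniv : (Set.univ : Set (AddCircle (1 : ℝ))) ⊆ {F x, -F x} := by
    intro z _
    have hz : z ∈ closure (F '' (Set.range fun n : ℕ => g^[n] x)) := by
      rw [hdense.closure_eq]; trivial
    exact closure_minimal hsub hSfin.isClosed hz
  haveI : Infinite (AddCircle (1 : ℝ)) := by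
    have h := Set.infinite_coe_iff.mpr (Set.Ico_infinite (by norm_num : (0:ℝ) < 0 + 1))
    exact (AddCircle.equivIco (1:ℝ) 0).infinite_iff.mpr h
  exact Set.infinite_univ (hSfin.subset huniv)
end
end

section
/- Let f : T² → T² be an area preserving non-invertible toral endomorphism (degree at least two) and U ⊂ T² a strictly f-invariant regular open set. Then for every connected component U₀ of U there exists n ≥ 1 such that f⁻ⁿ(U₀) = U₀. -/
open MeasureTheory Topology Polynomial Set

attribute [local instance] ZeroLEOneClass.factZeroLtOne

noncomputable section

lemma pr_continuous : Continuous pr :=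
  (continuous_quotient_mk'.comp continuous_fst).prodMk
    (continuous_quotient_mk'.comp continuous_snd)

lemma pr_isOpenMap : IsOpenMap pr := by
  have h : IsOpenMap ((↑) : ℝ → AddCircle (1 : ℝ)) :=
    fun s hs => QuotientAddGroup.isOpenMap_coe s hs
  exact h.prodMap h

lemma pr_surjective : Function.Surjective pr := by
  rintro ⟨a, b⟩
  obtain ⟨x, rfl⟩ := QuotientAddGroup.mk_surjective a
  obtain ⟨y, rfl⟩ := QuotientAddGroup.mk_surjective b
  exact ⟨(x, y), rfl⟩

instance T2.locallyConnectedSpace : LocallyConnectedSpace T2 := by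
  rw [locallyConnectedSpace_iff_connected_subsets]
  intro x U hU
  obtain ⟨y, rfl⟩ := pr_surjective x
  have hy : pr ⁻¹' U ∈ 𝓝 y := pr_continuous.continuousAt.preimage_mem_nhds hU
  obtain ⟨V, hV, hVc, hVU⟩ :=
    locallyConnectedSpace_iff_connected_subsets.mp inferInstance y _ hy
  exact ⟨pr '' V, pr_isOpenMap.image_mem_nhds hV, hVc.image _ pr_continuous.continuousOn,
    image_subset_iff.2 hVU⟩

/-- If `f` is an area preserving non-invertible toral endomorphism
(degree `|det A| ≥ 2`) and `U` a strictly `f`-invariant regular open set, then every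
connected component `U₀` of `U` satisfies `f⁻ⁿ(U₀) = U₀` for some `n ≥ 1`. -/
theorem statement14
    (f : T2 → T2) (hf : IsLocalHomeomorph f) (hpres : AreaPreserving f)
    (A : Matrix (Fin 2) (Fin 2) ℤ) (hdeg : 2 ≤ |A.det|)
    (g : T2 → T2) (hgc : Continuous g)
    (hg : ∀ p : ℝ × ℝ, g (pr p) = pr (matAct A p))
    (hhom : ContinuousMap.Homotopic ⟨f, hf.continuous⟩ ⟨g, hgc⟩)
    (U : Set T2) (hreg : IsRegularOpenSet U) (hUopen : IsOpen U) (hinv : f ⁻¹' U = U)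
    (U₀ : Set T2) (hU₀ : ∃ x ∈ U, U₀ = connectedComponentIn U x) :
    ∃ n : ℕ, 1 ≤ n ∧ f^[n] ⁻¹' U₀ = U₀ := by
  classical
  obtain ⟨x₀, hx₀U, rfl⟩ := hU₀
  have hfc : Continuous f := hf.continuous
  have hfU : ∀ z, z ∈ U → f z ∈ U := fun z hz => by rw [← hinv] at hz; exact hz
  set c : ℕ → Set T2 := fun n => connectedComponentIn U (f^[n] x₀) with hc
  have hxn : ∀ n, f^[n] x₀ ∈ U := by
    intro n; induction n with
    | zero => exact hx₀U
    | succ n ih => rw [Function.iterate_succ_apply']; exact hfU _ ih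
  have hopen : ∀ n, IsOpen (c n) := fun n => hUopen.connectedComponentIn
  have hmeas : ∀ n, MeasurableSet (c n) := fun n => (hopen n).measurableSet
  have hnemem : ∀ n, f^[n] x₀ ∈ c n := fun n => mem_connectedComponentIn (hxn n)
  -- image of a component is contained in the component of the image
  have himg : ∀ z : T2, z ∈ U → f '' connectedComponentIn U z ⊆ connectedComponentIn U (f z) := by
    intro z hz
    apply IsPreconnected.subset_connectedComponentIn
    · exact isPreconnected_connectedComponentIn.image f hfc.continuousOn
    · exact ⟨z, mem_connectedComponentIn hz, rfl⟩
    · rintro w ⟨v, hv, rfl⟩; exact hfU v (connectedComponentIn_subset U z hv)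
  have hstep : ∀ n, c n ⊆ f ⁻¹' c (n + 1) := by
    intro n z hz
    have h1 : f z ∈ connectedComponentIn U (f (f^[n] x₀)) := himg (f^[n] x₀) (hxn n) ⟨z, hz, rfl⟩
    simpa [hc, Function.iterate_succ_apply'] using h1
  have hmono : Monotone fun n => volume (c n) := by
    apply monotone_nat_of_le_succ
    intro n
    calc volume (c n) ≤ volume (f ⁻¹' c (n + 1)) := measure_mono (hstep n)
    _ = volume (c (n + 1)) := hpres _ (hmeas _)
  -- exactness: equal measures force the preimage to be exactly the previous component
  have hexact : ∀ n, volume (c (n + 1)) ≤ volume (c n) → f ⁻¹' c (n + 1) = c n := by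
    intro n hle
    refine Subset.antisymm ?_ (hstep n)
    by_contra hsub
    rw [Set.not_subset] at hsub
    obtain ⟨y, hy, hyn⟩ := hsub
    have hfy : f y ∈ c (n + 1) := hy
    have hyU : y ∈ U := by
      rw [← hinv]; exact connectedComponentIn_subset U _ hfy
    set D := connectedComponentIn U y with hD
    have hyD : y ∈ D := mem_connectedComponentIn hyU
    have hDsub : D ⊆ f ⁻¹' c (n + 1) := by
      rintro w hw
      have h1 : f w ∈ connectedComponentIn U (f y) := himg y hyU ⟨w, hw, rfl⟩
      have h2 : connectedComponentIn U (f^[n + 1] x₀) = connectedComponentIn U (f y) :=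
        connectedComponentIn_eq hfy
      show f w ∈ connectedComponentIn U (f^[n + 1] x₀)
      rw [h2]; exact h1
    have hdisj : Disjoint (c n) D := by
      rw [Set.disjoint_left]
      intro z hz hz'
      have e1 : connectedComponentIn U (f^[n] x₀) = connectedComponentIn U z :=
        connectedComponentIn_eq hz
      have e2 : connectedComponentIn U y = connectedComponentIn U z :=
        connectedComponentIn_eq hz'
      refine hyn ?_
      show y ∈ connectedComponentIn U (f^[n] x₀)
      rw [e1, ← e2]; exact hyD
    have hDopen : IsOpen D := hUopen.connectedComponentIn
    have hDpos : 0 < volume D := hDopen.measure_pos volume ⟨y, hyD⟩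
    have hsum : volume (c n) + volume D ≤ volume (f ⁻¹' c (n + 1)) := by
      rw [← measure_union hdisj hDopen.measurableSet]
      exact measure_mono (union_subset (hstep n) hDsub)
    rw [hpres _ (hmeas _)] at hsum
    have hfin : volume (c n) ≠ ⊤ := measure_ne_top _ _
    exact absurd (hsum.trans hle) (ENNReal.lt_add_right hfin hDpos.ne').not_ge
  have hpos : 0 < volume (c 0) := (hopen 0).measure_pos volume ⟨_, hnemem 0⟩
  -- pigeonhole: the orbit of components must repeat
  have hrep : ∃ i j, i < j ∧ c i = c j := by
    by_contra hcon
    push_neg at hcon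
    have hne : ∀ a b, a ≠ b → c a ≠ c b := by
      intro a b hab
      rcases lt_or_gt_of_ne hab with h | h
      · exact hcon a b h
      · exact fun e => hcon b a h e.symm
    obtain ⟨N, hN⟩ := ENNReal.exists_nat_mul_gt hpos.ne' (measure_ne_top (volume : Measure T2) univ)
    have hdisj : (↑(Finset.range N) : Set ℕ).PairwiseDisjoint c := by
      intro a _ b _ hab
      rw [Function.onFun, Set.disjoint_left]
      intro z hz hz'
      have e1 : connectedComponentIn U (f^[a] x₀) = connectedComponentIn U z :=
        connectedComponentIn_eq hz
      have e2 : connectedComponentIn U (f^[b] x₀) = connectedComponentIn U z :=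
        connectedComponentIn_eq hz'
      refine hne a b hab ?_
      show connectedComponentIn U (f^[a] x₀) = connectedComponentIn U (f^[b] x₀)
      rw [e1, ← e2]
    have hle : (N : ENNReal) * volume (c 0) ≤ volume (⋃ n ∈ Finset.range N, c n) := by
      rw [measure_biUnion_finset hdisj fun n _ => hmeas n]
      have h1 : (N : ENNReal) * volume (c 0) = ∑ _n ∈ Finset.range N, volume (c 0) := by
        simp [Finset.sum_const, mul_comm]
      have h2 : ∑ _n ∈ Finset.range N, volume (c 0) ≤ ∑ n ∈ Finset.range N, volume (c n) :=
        Finset.sum_le_sum fun n _ => hmono (Nat.zero_le n)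
      exact h1.le.trans h2
    exact absurd (hle.trans (measure_mono (subset_univ _))) hN.not_ge
  obtain ⟨i, j, hij, hcij⟩ := hrep
  set p := j - i with hp
  have hp1 : 1 ≤ p := Nat.le_sub_of_add_le (by omega)
  have hjip : i + p = j := Nat.add_sub_cancel' hij.le
  -- downward induction: c t = c (t + p) for all t ≤ i
  have keyaux : ∀ k, c (i - k) = c (i - k + p) := by
    intro k
    induction k with
    | zero => simpa [hjip] using hcij
    | succ k ih =>
      by_cases hk : i ≤ k
      · have : i - (k + 1) = i - k := by omega
        rw [this]; exact ih
      · push_neg at hk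
        set t := i - (k + 1) with ht
        have ht1 : t + 1 = i - k := by omega
        have ih' : c (t + 1) = c (t + 1 + p) := by rw [ht1]; exact ih
        have hle : volume (c (t + p + 1)) ≤ volume (c (t + p)) := by
          have e : t + p + 1 = t + 1 + p := by omega
          rw [e, ← ih']
          exact hmono (by omega : t + 1 ≤ t + p)
        have hex : f ⁻¹' c (t + p + 1) = c (t + p) := hexact (t + p) hle
        have hsubset : c t ⊆ c (t + p) := by
          have e : t + p + 1 = t + 1 + p := by omega
          have : c t ⊆ f ⁻¹' c (t + 1) := hstep t
          rw [ih'] at this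
          rw [← e] at this
          rw [hex] at this
          exact this
        have hxmem : f^[t] x₀ ∈ c (t + p) := hsubset (hnemem t)
        have : connectedComponentIn U (f^[t + p] x₀) = connectedComponentIn U (f^[t] x₀) :=
          connectedComponentIn_eq hxmem
        exact this.symm
  have h0 : c 0 = c p := by
    have := keyaux i
    simpa using this
  -- measures are constant on [0, p]
  have hconst : ∀ t, t ≤ p → volume (c t) = volume (c 0) := by
    intro t ht
    refine le_antisymm ?_ (hmono (Nat.zero_le t))
    rw [h0]; exact hmono ht
  -- iterate exactness
  have hiter : ∀ t, t ≤ p → f^[t] ⁻¹' c t = c 0 := by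
    intro t ht
    induction t with
    | zero => simp
    | succ t ih =>
      have h1 : f ⁻¹' c (t + 1) = c t := by
        apply hexact t
        rw [hconst (t + 1) ht, hconst t (by omega)]
      have : f^[t + 1] ⁻¹' c (t + 1) = f^[t] ⁻¹' (f ⁻¹' c (t + 1)) := by
        rw [Function.iterate_succ']; rfl
      rw [this, h1]
      exact ih (by omega)
  refine ⟨p, hp1, ?_⟩
  have hfinal : f^[p] ⁻¹' c p = c 0 := hiter p le_rfl
  show f^[p] ⁻¹' c 0 = c 0
  nth_rewrite 1 [h0]
  exact hfinal
end
end

section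
/- Let γ and σ be loops in T² whose homotopy classes [γ] and [σ], regarded as elements of π₁(T²) ≅ ℤ², are linearly independent over ℤ. Then the images of γ and σ intersect: there exist s, t with γ(s) = σ(t). -/
open MeasureTheory Topology Polynomial Set

theorem Real.fact_zero_lt_one : Fact ((0 : ℝ) < 1) :=
  ⟨zero_lt_one⟩

attribute [local instance] Real.fact_zero_lt_one

noncomputable section

section St15Aux
open Complex Finset

/-- `φ` (restricted to `[0,1]`) has a continuous logarithm whose total increment is `d`. -/
def HasDisp (φ : ℝ → ℂ) (d : ℂ) : Prop :=
  ∃ ψ : ℝ → ℂ, ContinuousOn ψ (Icc 0 1) ∧ (∀ t ∈ Icc (0:ℝ) 1, Complex.exp (ψ t) = φ t) ∧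
    ψ 1 - ψ 0 = d

lemma const_of_int (f : ℝ → ℝ) (hf : ContinuousOn f (Icc 0 1))
    (h : ∀ t ∈ Icc (0:ℝ) 1, ∃ n : ℤ, f t = 2 * Real.pi * n) : f 1 = f 0 := by
  by_contra hne
  obtain ⟨m, hm⟩ := h 0 (by norm_num)
  obtain ⟨n, hn⟩ := h 1 (by norm_num)
  have hpi := Real.pi_pos
  have key : ∀ y : ℝ, y ∈ f '' Icc (0:ℝ) 1 → ∀ j : ℤ, y ≠ 2 * Real.pi * j + Real.pi := by
    rintro y ⟨t, ht, rfl⟩ j hy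
    obtain ⟨k, hk⟩ := h t ht
    have h4 : (2*(k:ℝ) - 2*j - 1) * Real.pi = 0 := by rw [hk] at hy; linear_combination hy
    have h5 : (2*(k:ℝ) - 2*j - 1) = 0 := by
      rcases mul_eq_zero.mp h4 with h | h
      · exact h
      · exact absurd h Real.pi_ne_zero
    have : (2*k - 2*j - 1 : ℤ) = 0 := by exact_mod_cast h5
    omega
  rcases lt_or_gt_of_ne hne with hlt | hlt
  · -- f 1 < f 0, so n < m
    have hnm : (n:ℝ) < m := by
      have h2 : 2 * Real.pi * (n:ℝ) < 2 * Real.pi * m := by rw [← hn, ← hm]; exact hlt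
      exact lt_of_mul_lt_mul_left h2 (by positivity)
    have hnm' : (n:ℝ) + 1 ≤ m := by exact_mod_cast Int.add_one_le_iff.mpr (by exact_mod_cast hnm)
    have hy : f 1 + Real.pi ∈ Icc (f 1) (f 0) := by
      constructor
      · linarith
      · rw [hm, hn]; nlinarith
    have := intermediate_value_Icc' (by norm_num : (0:ℝ) ≤ 1) hf hy
    exact key _ this n (by rw [hn])
  · have hnm : (m:ℝ) < n := by
      have h2 : 2 * Real.pi * (m:ℝ) < 2 * Real.pi * n := by rw [← hn, ← hm]; exact hlt
      exact lt_of_mul_lt_mul_left h2 (by positivity)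
    have hnm' : (m:ℝ) + 1 ≤ n := by exact_mod_cast Int.add_one_le_iff.mpr (by exact_mod_cast hnm)
    have hy : f 0 + Real.pi ∈ Icc (f 0) (f 1) := by
      constructor
      · linarith
      · rw [hm, hn]; nlinarith
    have := intermediate_value_Icc (by norm_num : (0:ℝ) ≤ 1) hf hy
    exact key _ this m (by rw [hm])

lemma hasDisp_unique {φ : ℝ → ℂ} {d₁ d₂ : ℂ} (h₁ : HasDisp φ d₁) (h₂ : HasDisp φ d₂) :
    d₁ = d₂ := by
  obtain ⟨ψ₁, hc₁, he₁, hd₁⟩ := h₁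
  obtain ⟨ψ₂, hc₂, he₂, hd₂⟩ := h₂
  have key : ∀ t ∈ Icc (0:ℝ) 1, ∃ k : ℤ, ψ₁ t - ψ₂ t = (k : ℂ) * (2 * Real.pi * Complex.I) := by
    intro t ht
    obtain ⟨k, hk⟩ := Complex.exp_eq_exp_iff_exists_int.mp ((he₁ t ht).trans (he₂ t ht).symm)
    exact ⟨k, by rw [hk]; push_cast; ring⟩
  have hgc : ContinuousOn (fun t => (ψ₁ t - ψ₂ t).im) (Icc 0 1) := by
    exact Complex.continuous_im.comp_continuousOn (hc₁.sub hc₂)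
  have him : (fun t => (ψ₁ t - ψ₂ t).im) 1 = (fun t => (ψ₁ t - ψ₂ t).im) 0 := by
    apply const_of_int _ hgc
    intro t ht
    obtain ⟨k, hk⟩ := key t ht
    refine ⟨k, ?_⟩
    show (ψ₁ t - ψ₂ t).im = _
    rw [hk]
    simp [Complex.mul_im]
    ring
  have hre : ∀ t ∈ Icc (0:ℝ) 1, (ψ₁ t - ψ₂ t).re = 0 := by
    intro t ht
    obtain ⟨k, hk⟩ := key t ht
    rw [hk]
    simp [Complex.mul_re]
  have h0 : (0:ℝ) ∈ Icc (0:ℝ) 1 := by norm_num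
  have h1 : (1:ℝ) ∈ Icc (0:ℝ) 1 := by norm_num
  rw [← hd₁, ← hd₂]
  apply Complex.ext
  · have := hre 1 h1; have := hre 0 h0; simp only [Complex.sub_re] at *; linarith
  · simp only [Complex.sub_im] at him ⊢; linarith [him]

lemma prod_div_telescope (f : ℕ → ℂ) (hf : ∀ k, f k ≠ 0) (N : ℕ) :
    ∏ k ∈ Finset.range N, f (k+1) / f k = f N / f 0 := by
  induction N with
  | zero => simp [div_self (hf 0)]
  | succ N ih =>
    rw [Finset.prod_range_succ, ih, mul_comm]
    rw [div_mul_div_comm]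
    rw [mul_comm (f N) (f 0)]
    exact mul_div_mul_right _ _ (hf N)

lemma exists_hasDisp (φ : ℝ → ℂ) (hc : Continuous φ) (h0 : ∀ t, φ t ≠ 0) :
    ∃ d, HasDisp φ d := by
  obtain ⟨t₀, ht₀, hmin'⟩ := isCompact_Icc.exists_isMinOn (nonempty_Icc.mpr zero_le_one)
      (hc.norm.continuousOn (s := Icc (0:ℝ) 1))
  have hmin : ∀ u ∈ Icc (0:ℝ) 1, ‖φ t₀‖ ≤ ‖φ u‖ := fun u hu => hmin' hu
  set m := ‖φ t₀‖ with hm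
  have hm0 : 0 < m := norm_pos_iff.mpr (h0 t₀)
  have huc := isCompact_Icc.uniformContinuousOn_of_continuous
      (hc.continuousOn (s := Icc (0:ℝ) 1))
  rw [Metric.uniformContinuousOn_iff] at huc
  obtain ⟨δ, hδ, hδ'⟩ := huc m hm0
  obtain ⟨n, hn⟩ := exists_nat_gt (1/δ)
  have hn0 : (0:ℝ) < n := lt_trans (by positivity) hn
  have h1n : 1 / (n:ℝ) < δ := by
    rw [div_lt_iff₀ hn0]
    have := (div_lt_iff₀ hδ).mp hn
    linarith
  -- key closeness estimate
  have key : ∀ (t : ℝ) (k : ℕ), k < n →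
      dist (φ (min t (((k:ℝ)+1)/n))) (φ (min t ((k:ℝ)/n))) < ‖φ (min t ((k:ℝ)/n))‖ := by
    intro t k hk
    have hstep : (k:ℝ)/n ≤ ((k:ℝ)+1)/n := (div_le_div_iff_of_pos_right hn0).mpr (by linarith)
    rcases le_or_gt t ((k:ℝ)/n) with ht | ht
    · rw [min_eq_left ht, min_eq_left (ht.trans hstep)]
      simpa using norm_pos_iff.mpr (h0 t)
    · have hx : min t ((k:ℝ)/n) = (k:ℝ)/n := min_eq_right ht.le
      have hkn : ((k:ℝ)+1) ≤ n := by exact_mod_cast Nat.succ_le_of_lt hk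
      have hxI : (k:ℝ)/n ∈ Icc (0:ℝ) 1 := by
        constructor
        · positivity
        · rw [div_le_one hn0]; linarith
      have hyge : (k:ℝ)/n ≤ min t (((k:ℝ)+1)/n) := le_min ht.le hstep
      have hyle : min t (((k:ℝ)+1)/n) ≤ ((k:ℝ)+1)/n := min_le_right _ _
      have hyI : min t (((k:ℝ)+1)/n) ∈ Icc (0:ℝ) 1 := by
        constructor
        · exact le_trans (by positivity) hyge
        · exact le_trans hyle (by rw [div_le_one hn0]; linarith)
      have hdist : dist (min t (((k:ℝ)+1)/n)) ((k:ℝ)/n) < δ := by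
        rw [Real.dist_eq, _root_.abs_of_nonneg (by linarith [hyge])]
        have : (((k:ℝ)+1)/n) - ((k:ℝ)/n) = 1/n := by field_simp; ring
        linarith [hyle, h1n]
      rw [hx]
      calc dist (φ (min t (((k:ℝ)+1)/n))) (φ ((k:ℝ)/n)) < m := hδ' _ hyI _ hxI hdist
        _ ≤ ‖φ ((k:ℝ)/n)‖ := hmin _ hxI
  -- the lift
  set ψ : ℝ → ℂ := fun t => Complex.log (φ 0) +
    ∑ k ∈ Finset.range n, Complex.log (φ (min t (((k:ℝ)+1)/n)) / φ (min t ((k:ℝ)/n))) with hψ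
  have hratio : ∀ (t : ℝ) (k : ℕ), k < n →
      φ (min t (((k:ℝ)+1)/n)) / φ (min t ((k:ℝ)/n)) ∈ Complex.slitPlane := by
    intro t k hk
    have h := key t k hk
    have hden := h0 (min t ((k:ℝ)/n))
    have : φ (min t (((k:ℝ)+1)/n)) / φ (min t ((k:ℝ)/n)) =
        1 + (φ (min t (((k:ℝ)+1)/n)) - φ (min t ((k:ℝ)/n))) / φ (min t ((k:ℝ)/n)) := by
      field_simp
      ring
    rw [this]
    apply Complex.mem_slitPlane_of_norm_lt_one
    rw [norm_div]
    rw [div_lt_one (norm_pos_iff.mpr hden)]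
    rw [dist_eq_norm] at h
    exact h
  have hcont : Continuous ψ := by
    apply continuous_const.add
    apply continuous_finset_sum
    intro k hk
    rw [Finset.mem_range] at hk
    rw [continuous_iff_continuousAt]
    intro t
    apply ContinuousAt.clog
    · exact ((hc.comp (continuous_id.min continuous_const)).div
        (hc.comp (continuous_id.min continuous_const)) (fun s => h0 _)).continuousAt
    · exact hratio t k hk
  refine ⟨ψ 1 - ψ 0, ψ, hcont.continuousOn, ?_, rfl⟩
  intro t ht
  simp only [hψ]
  rw [Complex.exp_add, Complex.exp_sum]
  have hterm : ∀ k ∈ Finset.range n,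
      Complex.exp (Complex.log (φ (min t (((k:ℝ)+1)/n)) / φ (min t ((k:ℝ)/n)))) =
      φ (min t (((k:ℝ)+1)/n)) / φ (min t ((k:ℝ)/n)) := by
    intro k _
    exact Complex.exp_log (div_ne_zero (h0 _) (h0 _))
  rw [Finset.prod_congr rfl hterm, Complex.exp_log (h0 0)]
  have htel := prod_div_telescope (fun k => φ (min t ((k:ℝ)/n))) (fun k => h0 _) n
  simp only [Nat.cast_add, Nat.cast_one, Nat.cast_zero, zero_div] at htel
  rw [div_self (ne_of_gt hn0), min_eq_left ht.2, min_eq_right ht.1] at htel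
  rw [htel, mul_comm, div_mul_cancel₀ _ (h0 0)]



lemma hasDisp_perturb {φ χ : ℝ → ℂ} (hφc : ContinuousOn φ (Icc 0 1))
    (hχc : ContinuousOn χ (Icc 0 1))
    (hχ0 : ∀ t ∈ Icc (0:ℝ) 1, χ t ≠ 0)
    (hclose : ∀ t ∈ Icc (0:ℝ) 1, ‖φ t - χ t‖ < ‖χ t‖)
    (hφl : φ 0 = φ 1) (hχl : χ 0 = χ 1) {d : ℂ} (h : HasDisp χ d) : HasDisp φ d := by
  obtain ⟨ψ, hψc, hψe, hψd⟩ := h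
  have hφ0 : ∀ t ∈ Icc (0:ℝ) 1, φ t ≠ 0 := by
    intro t ht h'
    have := hclose t ht
    rw [h', zero_sub, norm_neg] at this
    exact lt_irrefl _ this
  have hslit : ∀ t ∈ Icc (0:ℝ) 1, φ t / χ t ∈ Complex.slitPlane := by
    intro t ht
    have h1 : φ t / χ t = 1 + (φ t - χ t)/χ t := by
      field_simp [hχ0 t ht]
      ring
    rw [h1]
    apply Complex.mem_slitPlane_of_norm_lt_one
    rw [norm_div, div_lt_one (norm_pos_iff.mpr (hχ0 t ht))]
    exact hclose t ht
  refine ⟨fun t => ψ t + Complex.log (φ t / χ t), ?_, ?_, ?_⟩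
  · apply hψc.add
    intro t ht
    exact (((hφc t ht).div (hχc t ht) (hχ0 t ht)).clog (hslit t ht))
  · intro t ht
    rw [Complex.exp_add, hψe t ht,
      Complex.exp_log (div_ne_zero (hφ0 t ht) (hχ0 t ht)), mul_comm,
      div_mul_cancel₀ _ (hχ0 t ht)]
  · have h10 : Complex.log (φ 1 / χ 1) = Complex.log (φ 0 / χ 0) := by
      rw [← hφl, ← hχl]
    show ψ 1 + Complex.log (φ 1 / χ 1) - (ψ 0 + Complex.log (φ 0 / χ 0)) = d
    rw [h10]
    linear_combination hψd

lemma hasDisp_const (c : ℂ) (hc : c ≠ 0) : HasDisp (fun _ => c) 0 :=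
  ⟨fun _ => Complex.log c, continuousOn_const, fun _ _ => Complex.exp_log hc, sub_self _⟩

lemma main_no_nonvanishing (F : ℂ → ℂ) (hFc : Continuous F) (hF0 : ∀ z, F z ≠ 0)
    (C : ℝ) (hC : ∀ z, ‖F z - z‖ ≤ C) : False := by
  have hC0 : 0 ≤ C := le_trans (norm_nonneg _) (hC 0)
  set R : ℝ := C + 1 with hR
  have hR0 : 0 < R := by rw [hR]; linarith
  set e : ℝ → ℂ := fun θ => Complex.exp (((2*Real.pi*θ : ℝ) : ℂ) * Complex.I) with he
  have hnorme : ∀ θ, ‖e θ‖ = 1 := fun θ => by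
    rw [he]
    exact Complex.norm_exp_ofReal_mul_I _
  have hecont : Continuous e := by
    rw [he]
    exact Complex.continuous_exp.comp (by continuity)
  have heloop : e 0 = e 1 := by
    show Complex.exp _ = Complex.exp _
    rw [show ((2*Real.pi*(1:ℝ) : ℝ) : ℂ) * Complex.I = 2*Real.pi*Complex.I by push_cast; ring,
      Complex.exp_two_pi_mul_I,
      show ((2*Real.pi*(0:ℝ) : ℝ) : ℂ) * Complex.I = 0 by push_cast; ring,
      Complex.exp_zero]
  -- the big circle has displacement 2πi
  have hcirc : HasDisp (fun θ => (R:ℂ) * e θ) (2*Real.pi*Complex.I) := by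
    refine ⟨fun θ => ((Real.log R : ℝ) : ℂ) + ((2*Real.pi*θ : ℝ) : ℂ) * Complex.I,
      ?_, ?_, ?_⟩
    · apply Continuous.continuousOn
      continuity
    · intro t _
      rw [he, Complex.exp_add, ← Complex.ofReal_exp, Real.exp_log hR0]
    · push_cast
      ring
  have hnormcirc : ∀ θ : ℝ, ‖(R:ℂ) * e θ‖ = R := fun θ => by
    rw [norm_mul, hnorme, Complex.norm_real, Real.norm_eq_abs, abs_of_pos hR0, mul_one]
  -- the loop F ∘ circle has displacement 2πi
  have hdispB : HasDisp (fun θ => F ((R:ℂ) * e θ)) (2*Real.pi*Complex.I) := by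
    apply hasDisp_perturb (χ := fun θ => (R:ℂ) * e θ)
    · exact (hFc.comp (continuous_const.mul hecont)).continuousOn
    · exact (continuous_const.mul hecont).continuousOn
    · intro t _
      rw [← norm_pos_iff, hnormcirc]
      exact hR0
    · intro t _
      rw [hnormcirc]
      calc ‖F ((R:ℂ) * e t) - (R:ℂ) * e t‖ ≤ C := hC _
        _ < R := by rw [hR]; linarith
    · exact congrArg F (by rw [heloop])
    · exact congrArg (fun z => (R:ℂ) * z) heloop
    · exact hcirc
  -- min of ‖F‖ on the closed ball
  obtain ⟨z₀, hz₀, hminB'⟩ := (isCompact_closedBall (0:ℂ) R).exists_isMinOn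
    ⟨0, by simp [hR0.le]⟩ (hFc.norm.continuousOn)
  set m : ℝ := ‖F z₀‖ with hm
  have hm0 : 0 < m := norm_pos_iff.mpr (hF0 z₀)
  have hminB : ∀ w ∈ Metric.closedBall (0:ℂ) R, m ≤ ‖F w‖ := fun w hw => hminB' hw
  have huc := (isCompact_closedBall (0:ℂ) R).uniformContinuousOn_of_continuous
    hFc.continuousOn
  rw [Metric.uniformContinuousOn_iff] at huc
  obtain ⟨δ, hδ, hδ'⟩ := huc m hm0
  obtain ⟨n, hn⟩ := exists_nat_gt (R/δ)
  have hn0 : (0:ℝ) < n := lt_of_le_of_lt (by positivity) hn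
  have hRn : R/n < δ := by
    rw [div_lt_iff₀ hn0]
    have := (div_lt_iff₀ hδ).mp hn
    linarith
  have hmem : ∀ (c : ℝ), 0 ≤ c → c ≤ 1 → ∀ θ : ℝ, ((c*R : ℝ) : ℂ) * e θ ∈ Metric.closedBall (0:ℂ) R := by
    intro c hc0 hc1 θ
    rw [Metric.mem_closedBall, dist_zero_right, norm_mul, hnorme, mul_one,
      Complex.norm_real, Real.norm_eq_abs, _root_.abs_of_nonneg (by positivity)]
    nlinarith
  have chain : ∀ k : ℕ, k ≤ n → HasDisp (fun θ => F ((((k:ℝ)/n * R : ℝ) : ℂ) * e θ)) 0 := by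
    intro k hk
    induction k with
    | zero =>
      have h00 : (fun θ : ℝ => F ((((0:ℕ):ℝ)/n * R : ℝ) * e θ)) = fun _ => F 0 := by
        funext θ
        norm_num
      rw [h00]
      exact hasDisp_const (F 0) (hF0 0)
    | succ k ih =>
      have hk' : k ≤ n := le_of_lt (Nat.lt_of_succ_le hk)
      have hkn : (k:ℝ) ≤ n := by exact_mod_cast hk'
      have hkn' : ((k:ℝ)+1) ≤ n := by exact_mod_cast hk
      apply hasDisp_perturb (χ := fun θ => F ((((k:ℝ)/n * R : ℝ) : ℂ) * e θ))
      · apply Continuous.continuousOn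
        exact hFc.comp (continuous_const.mul hecont)
      · apply Continuous.continuousOn
        exact hFc.comp (continuous_const.mul hecont)
      · exact fun t _ => hF0 _
      · intro θ _
        have hz1 : ((((k:ℝ)+1)/n * R : ℝ) : ℂ) * e θ ∈ Metric.closedBall (0:ℂ) R := by
          apply hmem _ (by positivity) (by rw [div_le_one hn0]; linarith)
        have hz0 : ((((k:ℝ))/n * R : ℝ) : ℂ) * e θ ∈ Metric.closedBall (0:ℂ) R := by
          apply hmem _ (by positivity) (by rw [div_le_one hn0]; linarith)
        have hdist : dist (((((k:ℝ)+1)/n * R : ℝ) : ℂ) * e θ) ((((k:ℝ)/n * R : ℝ) : ℂ) * e θ) < δ := by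
          rw [dist_eq_norm, ← sub_mul, norm_mul, hnorme, mul_one, ← Complex.ofReal_sub,
            Complex.norm_real, Real.norm_eq_abs]
          have heq : ((k:ℝ)+1)/n * R - (k:ℝ)/n * R = R/n := by field_simp; ring
          rw [show ((k:ℝ)+1)/n * R - (k:ℝ)/n * R = R/n from heq, _root_.abs_of_pos (by positivity)]
          exact hRn
        have hlt := hδ' _ hz1 _ hz0 hdist
        rw [dist_eq_norm] at hlt
        have hge := hminB _ hz0
        push_cast at hlt hge ⊢
        exact lt_of_lt_of_le hlt hge
      · simp [heloop]
      · simp [heloop]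
      · exact ih hk'
  have hfin := chain n le_rfl
  have hnn : (fun θ : ℝ => F ((((n:ℝ)/n * R : ℝ) : ℂ) * e θ)) = fun θ => F ((R:ℂ) * e θ) := by
    funext θ
    rw [div_self (ne_of_gt hn0), one_mul]
  rw [hnn] at hfin
  have hcontr := hasDisp_unique hdispB hfin
  have him := congrArg Complex.im hcontr
  have h2 : (2*(Real.pi:ℂ)*Complex.I).im = 2*Real.pi := by simp
  rw [h2] at him
  simp only [Complex.zero_im] at him
  linarith [Real.pi_pos]


lemma addCircle_eq_of_int (x y : ℝ) (m : ℤ) (h : x - y = m) :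
    (x : AddCircle (1 : ℝ)) = (y : AddCircle (1 : ℝ)) := by
  rw [QuotientAddGroup.eq_iff_sub_mem]
  exact AddSubgroup.mem_zmultiples_iff.mpr ⟨m, by rw [h]; simp⟩

lemma pr_eq_of_int (u v : ℝ × ℝ) (m n : ℤ) (h1 : u.1 - v.1 = m) (h2 : u.2 - v.2 = n) :
    pr u = pr v := by
  unfold pr
  exact Prod.ext (addCircle_eq_of_int _ _ m h1) (addCircle_eq_of_int _ _ n h2)

/-- complex coordinates on `ℝ²` -/
def cx (w : ℝ × ℝ) : ℂ := (w.1 : ℂ) + (w.2 : ℂ) * Complex.I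

lemma cx_re (w : ℝ × ℝ) : (cx w).re = w.1 := by simp [cx]

lemma cx_im (w : ℝ × ℝ) : (cx w).im = w.2 := by simp [cx]

lemma cx_eq_zero {w : ℝ × ℝ} (h : cx w = 0) : w = 0 := by
  have h1 := congrArg Complex.re h
  have h2 := congrArg Complex.im h
  rw [cx_re] at h1
  rw [cx_im] at h2
  simp only [Complex.zero_re, Complex.zero_im] at h1 h2
  exact Prod.ext h1 h2

lemma cx_continuous : Continuous cx := by
  unfold cx
  continuity

lemma cx_sub (w w' : ℝ × ℝ) : cx (w - w') = cx w - cx w' := by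
  simp only [cx, Prod.fst_sub, Prod.snd_sub]
  push_cast
  ring

lemma cx_add (w w' : ℝ × ℝ) : cx (w + w') = cx w + cx w' := by
  simp only [cx, Prod.fst_add, Prod.snd_add]
  push_cast
  ring

end St15Aux

/-- Two loops on `T²` whose homotopy classes, seen as elements of
`π₁(T²) ≅ ℤ²` (the endpoint displacements of lifts to `ℝ²`), are linearly independent
over `ℤ` must intersect. -/
theorem statement15
    (x y : T2) (γ : Path x x) (σ : Path y y)
    (a b : ℤ × ℤ)
    -- a lift of γ to ℝ², with displacement a = [γ] ∈ ℤ²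
    (p q : ℝ × ℝ) (Γ : Path p q) (hΓ : ∀ t, pr (Γ t) = γ t)
    (ha : q - p = ((a.1 : ℝ), (a.2 : ℝ)))
    -- a lift of σ to ℝ², with displacement b = [σ] ∈ ℤ²
    (r s : ℝ × ℝ) (Sg : Path r s) (hSg : ∀ t, pr (Sg t) = σ t)
    (hb : s - r = ((b.1 : ℝ), (b.2 : ℝ)))
    -- [γ] and [σ] are linearly independent in ℤ²
    (hind : LinearIndependent ℤ ![a, b]) :
    ∃ u v : unitInterval, γ u = σ v := by
  classical
  by_contra hcon
  push_neg at hcon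
  -- Step 1: the determinant is nonzero
  have hd : a.1 * b.2 - a.2 * b.1 ≠ 0 := by
    intro h
    have hli := Fintype.linearIndependent_iff.mp hind
    by_cases h1 : a.1 = 0
    · by_cases h2 : a.2 = 0
      · have := hli ![1, 0] (by
          simp [Fin.sum_univ_two, Prod.ext_iff, h1, h2]) 0
        simp at this
      · have := hli ![b.2, -a.2] (by
          simp only [Fin.sum_univ_two, Matrix.cons_val_zero, Matrix.cons_val_one,
            Matrix.head_cons, smul_eq_mul, Prod.ext_iff, Prod.fst_add, Prod.snd_add,
            Prod.smul_fst, Prod.smul_snd, Prod.fst_zero, Prod.snd_zero]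
          constructor
          · linear_combination h
          · ring) 1
        simp at this
        exact h2 this
    · have := hli ![b.1, -a.1] (by
        simp only [Fin.sum_univ_two, Matrix.cons_val_zero, Matrix.cons_val_one,
          Matrix.head_cons, smul_eq_mul, Prod.ext_iff, Prod.fst_add, Prod.snd_add,
          Prod.smul_fst, Prod.smul_snd, Prod.fst_zero, Prod.snd_zero]
        constructor
        · ring
        · linear_combination -h) 1
      simp at this
      exact h1 this
  have hD0 : ((a.1 * b.2 - a.2 * b.1 : ℤ) : ℝ) ≠ 0 := Int.cast_ne_zero.mpr hd
  set aR : ℝ × ℝ := ((a.1 : ℝ), (a.2 : ℝ)) with haR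
  set bR : ℝ × ℝ := ((b.1 : ℝ), (b.2 : ℝ)) with hbR
  -- Step 2: periodic lifts to ℝ²
  set fΓ : ℝ → ℝ × ℝ := fun t => Γ.extend t - t • aR with hfΓ
  set fS : ℝ → ℝ × ℝ := fun t => Sg.extend t - t • bR with hfS
  have hfΓ01 : fΓ 0 = fΓ 1 := by
    simp only [hfΓ, Path.extend_zero, Path.extend_one, zero_smul, one_smul, sub_zero]
    rw [← ha]
    abel
  have hfS01 : fS 0 = fS 1 := by
    simp only [hfS, Path.extend_zero, Path.extend_one, zero_smul, one_smul, sub_zero]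
    rw [← hb]
    abel
  have hfΓc : Continuous fΓ := Γ.continuous_extend.sub (continuous_id.smul continuous_const)
  have hfSc : Continuous fS := Sg.continuous_extend.sub (continuous_id.smul continuous_const)
  have hfΓfrac : Continuous (fun u : ℝ => fΓ (Int.fract u)) :=
    ContinuousOn.comp_fract'' hfΓc.continuousOn hfΓ01
  have hfSfrac : Continuous (fun u : ℝ => fS (Int.fract u)) :=
    ContinuousOn.comp_fract'' hfSc.continuousOn hfS01
  set ΓL : ℝ → ℝ × ℝ := fun u => fΓ (Int.fract u) + u • aR with hΓL
  set SL : ℝ → ℝ × ℝ := fun u => fS (Int.fract u) + u • bR with hSL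
  have hΓLc : Continuous ΓL := hfΓfrac.add (continuous_id.smul continuous_const)
  have hSLc : Continuous SL := hfSfrac.add (continuous_id.smul continuous_const)
  -- Step 3: the lifts never agree modulo the trivial lattice point
  have hkey : ∀ u v : ℝ, ΓL u - SL v ≠ 0 := by
    intro u v heq
    have hfru : Int.fract u ∈ Set.Icc (0:ℝ) 1 := ⟨Int.fract_nonneg u, (Int.fract_lt_one u).le⟩
    have hfrv : Int.fract v ∈ Set.Icc (0:ℝ) 1 := ⟨Int.fract_nonneg v, (Int.fract_lt_one v).le⟩
    rw [sub_eq_zero] at heq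
    simp only [hΓL, hSL] at heq
    have h3 : fΓ (Int.fract u) - fS (Int.fract v) = v • bR - u • aR := by
      rw [sub_eq_sub_iff_add_eq_add, heq]
      abel
    have e1 : Γ.extend (Int.fract u) = fΓ (Int.fract u) + Int.fract u • aR := by
      simp only [hfΓ]
      abel
    have e2 : Sg.extend (Int.fract v) = fS (Int.fract v) + Int.fract v • bR := by
      simp only [hfS]
      abel
    have hext : Γ.extend (Int.fract u) - Sg.extend (Int.fract v)
        = ((⌊v⌋ : ℝ)) • bR - ((⌊u⌋ : ℝ)) • aR := by
      rw [e1, e2, ← Int.self_sub_fract u, ← Int.self_sub_fract v, sub_smul, sub_smul]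
      linear_combination (norm := module) h3
    have hprg : pr (Γ.extend (Int.fract u)) = pr (Sg.extend (Int.fract v)) := by
      apply pr_eq_of_int _ _ (⌊v⌋ * b.1 - ⌊u⌋ * a.1) (⌊v⌋ * b.2 - ⌊u⌋ * a.2)
      · have hh := congrArg Prod.fst hext
        simp only [Prod.fst_sub, Prod.smul_fst, smul_eq_mul, haR, hbR] at hh
        rw [hh]
        push_cast
        ring
      · have hh := congrArg Prod.snd hext
        simp only [Prod.snd_sub, Prod.smul_snd, smul_eq_mul, haR, hbR] at hh
        rw [hh]
        push_cast
        ring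
    rw [Path.extend_apply Γ hfru, Path.extend_apply Sg hfrv] at hprg
    rw [hΓ, hSg] at hprg
    exact hcon _ _ hprg
  -- Step 4: invert the linear part
  set g : ℂ → ℂ := fun w =>
    (((((b.2:ℝ) * w.re - (b.1:ℝ) * w.im) / ((a.1 * b.2 - a.2 * b.1 : ℤ) : ℝ)) : ℝ) : ℂ) +
    (((((a.2:ℝ) * w.re - (a.1:ℝ) * w.im) / ((a.1 * b.2 - a.2 * b.1 : ℤ) : ℝ)) : ℝ) : ℂ) *
      Complex.I with hg
  have hgc : Continuous g := by
    rw [hg]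
    apply Continuous.add
    · apply Complex.continuous_ofReal.comp
      exact ((continuous_const.mul Complex.continuous_re).sub
        (continuous_const.mul Complex.continuous_im)).div_const _
    · apply Continuous.mul _ continuous_const
      apply Complex.continuous_ofReal.comp
      exact ((continuous_const.mul Complex.continuous_re).sub
        (continuous_const.mul Complex.continuous_im)).div_const _
  have hgre : ∀ w : ℂ, (g w).re
      = ((b.2:ℝ) * w.re - (b.1:ℝ) * w.im) / ((a.1 * b.2 - a.2 * b.1 : ℤ) : ℝ) := by
    intro w
    simp only [hg, Complex.add_re, Complex.mul_re, Complex.ofReal_re, Complex.ofReal_im,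
      Complex.I_re, Complex.I_im]
    ring
  have hgim : ∀ w : ℂ, (g w).im
      = ((a.2:ℝ) * w.re - (a.1:ℝ) * w.im) / ((a.1 * b.2 - a.2 * b.1 : ℤ) : ℝ) := by
    intro w
    simp only [hg, Complex.add_im, Complex.mul_im, Complex.ofReal_re, Complex.ofReal_im,
      Complex.I_re, Complex.I_im]
    ring
  have hlin : ∀ w : ℂ, cx ((g w).re • aR - (g w).im • bR) = w := by
    intro w
    apply Complex.ext
    · rw [cx_re]
      simp only [Prod.fst_sub, Prod.smul_fst, smul_eq_mul, haR, hbR, hgre, hgim]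
      push_cast at hD0 ⊢
      have hD1 : ((b.2:ℝ) * a.1 - b.1 * a.2) ≠ 0 := by intro h; apply hD0; linarith
      field_simp
      ring
    · rw [cx_im]
      simp only [Prod.snd_sub, Prod.smul_snd, smul_eq_mul, haR, hbR, hgre, hgim]
      push_cast at hD0 ⊢
      have hD1 : ((b.2:ℝ) * a.1 - b.1 * a.2) ≠ 0 := by intro h; apply hD0; linarith
      field_simp
      ring
  -- Step 5: bounds for the periodic parts
  obtain ⟨t₁, ht₁, hmax₁⟩ := isCompact_Icc.exists_isMaxOn (Set.nonempty_Icc.mpr zero_le_one)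
      ((cx_continuous.comp hfΓc).norm.continuousOn (s := Set.Icc (0:ℝ) 1))
  obtain ⟨t₂, ht₂, hmax₂⟩ := isCompact_Icc.exists_isMaxOn (Set.nonempty_Icc.mpr zero_le_one)
      ((cx_continuous.comp hfSc).norm.continuousOn (s := Set.Icc (0:ℝ) 1))
  set M₁ : ℝ := ‖cx (fΓ t₁)‖ with hM₁def
  set M₂ : ℝ := ‖cx (fS t₂)‖ with hM₂def
  have hM₁ : ∀ t ∈ Set.Icc (0:ℝ) 1, ‖cx (fΓ t)‖ ≤ M₁ := fun t ht => hmax₁ ht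
  have hM₂ : ∀ t ∈ Set.Icc (0:ℝ) 1, ‖cx (fS t)‖ ≤ M₂ := fun t ht => hmax₂ ht
  -- Step 6: apply the degree-theoretic contradiction
  apply main_no_nonvanishing (fun z => cx (ΓL (g z).re - SL (g z).im)) ?_ ?_ (M₁ + M₂) ?_
  · exact cx_continuous.comp ((hΓLc.comp (Complex.continuous_re.comp hgc)).sub
      (hSLc.comp (Complex.continuous_im.comp hgc)))
  · intro z h
    exact hkey _ _ (cx_eq_zero h)
  · intro z
    show ‖cx (ΓL (g z).re - SL (g z).im) - z‖ ≤ M₁ + M₂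
    have hdecomp : cx (ΓL (g z).re - SL (g z).im) - z
        = cx (fΓ (Int.fract (g z).re)) - cx (fS (Int.fract (g z).im)) := by
      have hsplit : ΓL (g z).re - SL (g z).im
          = (fΓ (Int.fract (g z).re) - fS (Int.fract (g z).im))
            + ((g z).re • aR - (g z).im • bR) := by
        simp only [hΓL, hSL]
        abel
      rw [hsplit, cx_add, hlin z, cx_sub]
      abel
    rw [hdecomp]
    refine le_trans (norm_sub_le _ _) ?_
    exact add_le_add
      (hM₁ _ ⟨Int.fract_nonneg _, (Int.fract_lt_one _).le⟩)
      (hM₂ _ ⟨Int.fract_nonneg _, (Int.fract_lt_one _).le⟩)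
end
end
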